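/- arXiv:1307.4696 — 2 statements merged into one kernel-verified Lean document; each statement's English description precedes it below -/
import Mathlib

section
/- Let H be a complex Hilbert space and (Z_n)_{n≥1} a sequence of mutually orthogonal projections with ∑ Z_n = I strongly. Let S ∈ B(H) commute with all Z_n and define T = ∑_n n S Z_n on its maximal domain. If S is non-negative then T is non-negative; if S is self-adjoint then T is self-adjoint. -/
open scoped LinearPMap ComplexConjugate

local notation "⟪" x ", " y "⟫" => @inner ℂ _ _ x y

theorem stmt13_aux {H : Type*} [NormedAddCommGroup H] [InnerProductSpace ℂ H] [CompleteSpace H]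
    (Z : ℕ → H →L[ℂ] H) (S : H →L[ℂ] H)
    (hproj : ∀ n, IsIdempotentElem (Z n) ∧ IsSelfAdjoint (Z n))
    (horth : ∀ n m, n ≠ m → Z n * Z m = 0)
    (hsumI : ∀ ξ : H, HasSum (fun n => Z n ξ) ξ)
    (hcomm : ∀ n, S * Z n = Z n * S)
    (T : H →ₗ.[ℂ] H)
    (hT : ∀ ξ η : H, (ξ, η) ∈ T.graph ↔
      Summable (fun n : ℕ => ((n : ℝ) + 1) ^ 2 * ‖S (Z n ξ)‖ ^ 2) ∧
        HasSum (fun n : ℕ => ((n : ℝ) + 1) • S (Z n ξ)) η)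
    (hS : IsSelfAdjoint S) : IsSelfAdjoint T := by
  -- basic facts
  have hZsymm : ∀ n (x y : H), ⟪Z n x, y⟫ = ⟪x, Z n y⟫ := fun n => ((hproj n).2).isSymmetric
  have hA : ∀ n, IsSelfAdjoint (S * Z n) := by
    intro n
    rw [IsSelfAdjoint, star_mul, (hproj n).2.star_eq, hS.star_eq, ← hcomm n]
  have hAsymm : ∀ n (x y : H), ⟪S (Z n x), y⟫ = ⟪x, S (Z n y)⟫ := fun n => (hA n).isSymmetric
  have hZZ0 : ∀ m n (x : H), m ≠ n → Z m (Z n x) = 0 := by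
    intro m n x h
    have := congrArg (fun u : H →L[ℂ] H => u x) (horth m n h)
    simpa using this
  have hZZ : ∀ n (x : H), Z n (Z n x) = Z n x := by
    intro n x
    have := congrArg (fun u : H →L[ℂ] H => u x) (hproj n).1
    simpa using this
  have hZmem : ∀ n (x : H), (Z n x, ((n : ℝ) + 1) • S (Z n x)) ∈ T.graph := by
    intro n x
    rw [hT]
    constructor
    · apply summable_of_ne_finset_zero (s := {n})
      intro m hm
      simp [hZZ0 m n x (by simpa using hm)]
    · have := hasSum_single (f := fun m : ℕ => ((m : ℝ) + 1) • S (Z m (Z n x))) n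
        (by intro m hm; simp [hZZ0 m n x hm])
      simpa [hZZ n x] using this
  have hmemdom : ∀ n (x : H), Z n x ∈ T.domain := fun n x =>
    T.mem_domain_of_mem_graph (hZmem n x)
  have hdense : Dense (T.domain : Set H) := by
    intro ξ
    refine mem_closure_of_tendsto (hsumI ξ).tendsto_sum_nat
      (Filter.Eventually.of_forall fun N => ?_)
    exact Submodule.sum_mem _ fun n _ => hmemdom n ξ
  -- value of T on Z n x
  have hTZ : ∀ n (x : H), T ⟨Z n x, hmemdom n x⟩ = ((n : ℝ) + 1) • S (Z n x) := by
    intro n x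
    exact T.mem_graph_snd_inj (T.mem_graph ⟨Z n x, hmemdom n x⟩) (hZmem n x) rfl
  -- T is symmetric
  have hTx : ∀ x : T.domain, HasSum (fun n : ℕ => ((n : ℝ) + 1) • S (Z n (x : H))) (T x) :=
    fun x => ((hT x (T x)).mp (T.mem_graph x)).2
  have hterm : ∀ (n : ℕ) (x y : H), ⟪((n : ℝ) + 1) • S (Z n x), y⟫ = ⟪x, ((n : ℝ) + 1) • S (Z n y)⟫ := by
    intro n x y
    rw [RCLike.real_smul_eq_coe_smul (K := ℂ), RCLike.real_smul_eq_coe_smul (K := ℂ),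
      inner_smul_left, inner_smul_right, RCLike.conj_ofReal, hAsymm]
  have hsymm : T.IsFormalAdjoint T := by
    intro x y
    have h1 : HasSum (fun n : ℕ => ⟪(x : H), ((n : ℝ) + 1) • S (Z n (y : H))⟫) ⟪(x : H), T y⟫ :=
      (innerSL ℂ (x : H)).hasSum (hTx y)
    have h2 : HasSum (fun n : ℕ => ⟪(y : H), ((n : ℝ) + 1) • S (Z n (x : H))⟫) ⟪(y : H), T x⟫ :=
      (innerSL ℂ (y : H)).hasSum (hTx x)
    have h3 : HasSum (fun n : ℕ => ⟪((n : ℝ) + 1) • S (Z n (x : H)), (y : H)⟫) ⟪T x, (y : H)⟫ := by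
      have := h2.star
      simpa [inner_conj_symm] using this
    exact h3.unique (by simpa only [hterm] using h1)
  have hle1 : T ≤ T† := hsymm.le_adjoint hdense
  -- Pythagoras
  have hpy : ∀ ζ : H, HasSum (fun n => ‖Z n ζ‖ ^ 2) (Complex.re ⟪ζ, ζ⟫) := by
    intro ζ
    have h1 : HasSum (fun n : ℕ => ⟪ζ, Z n ζ⟫) ⟪ζ, ζ⟫ := (innerSL ℂ ζ).hasSum (hsumI ζ)
    have h2 := h1.mapL Complex.reCLM
    have h3 : ∀ n : ℕ, Complex.re ⟪ζ, Z n ζ⟫ = ‖Z n ζ‖ ^ 2 := by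
      intro n
      rw [← hZZ n ζ, ← hZsymm, hZZ n ζ]
      simpa using inner_self_eq_norm_sq (𝕜 := ℂ) (Z n ζ)
    simpa only [Complex.reCLM_apply, h3] using h2
  -- the reverse inclusion
  have hfa := T.adjoint_isFormalAdjoint hdense
  have key : ∀ η : (T†).domain, ((η : H), T† η) ∈ T.graph := by
    intro η
    have hZζ : ∀ n, Z n (T† η) = ((n : ℝ) + 1) • S (Z n (η : H)) := by
      intro n
      refine ext_inner_right ℂ fun ξ => ?_
      calc ⟪Z n (T† η), ξ⟫ = ⟪T† η, Z n ξ⟫ := hZsymm n _ _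
        _ = ⟪(η : H), T ⟨Z n ξ, hmemdom n ξ⟩⟫ := hfa η ⟨Z n ξ, hmemdom n ξ⟩
        _ = ⟪(η : H), ((n : ℝ) + 1) • S (Z n ξ)⟫ := by rw [hTZ]
        _ = ⟪((n : ℝ) + 1) • S (Z n (η : H)), ξ⟫ := (hterm n _ _).symm
    rw [hT]
    constructor
    · refine (hpy (T† η)).summable.congr fun n => ?_
      rw [hZζ n, norm_smul, mul_pow]
      congr 1
      rw [Real.norm_eq_abs, sq_abs]
    · have := hsumI (T† η)
      simpa only [hZζ] using this
  have hle2 : T† ≤ T := by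
    refine LinearPMap.le_of_le_graph ?_
    rintro ⟨a, b⟩ hab
    rcases (LinearPMap.mem_graph_iff _).mp hab with ⟨η, h1, h2⟩
    have := key η
    rw [h1, h2] at this
    exact this
  exact le_antisymm hle2 hle1


/-- Let `(Z n)` (n ≥ 1, here indexed by `n+1` for `n : ℕ`) be mutually
orthogonal projections with `∑ Z n = I` strongly, and let `S` be a bounded operator
commuting with all `Z n`. Let `T = ∑ n S Z n` on its maximal domain (described via its
graph). If `S` is non-negative then `T` is non-negative; if `S` is self-adjoint then `T`
is self-adjoint. -/
theorem stmt13 {H : Type*} [NormedAddCommGroup H] [InnerProductSpace ℂ H] [CompleteSpace H]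
    (Z : ℕ → H →L[ℂ] H) (S : H →L[ℂ] H)
    (hproj : ∀ n, IsIdempotentElem (Z n) ∧ IsSelfAdjoint (Z n))
    (horth : ∀ n m, n ≠ m → Z n * Z m = 0)
    (hsumI : ∀ ξ : H, HasSum (fun n => Z n ξ) ξ)
    (hcomm : ∀ n, S * Z n = Z n * S)
    (T : H →ₗ.[ℂ] H)
    (hT : ∀ ξ η : H, (ξ, η) ∈ T.graph ↔
      Summable (fun n : ℕ => ((n : ℝ) + 1) ^ 2 * ‖S (Z n ξ)‖ ^ 2) ∧
        HasSum (fun n : ℕ => ((n : ℝ) + 1) • S (Z n ξ)) η) :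
    (0 ≤ S → IsSelfAdjoint T ∧ ∀ ξ : T.domain, 0 ≤ (inner ℂ (T ξ) (ξ : H) : ℂ).re) ∧
      (IsSelfAdjoint S → IsSelfAdjoint T) := by
  have hZsymm : ∀ (n : ℕ) (x y : H), ⟪Z n x, y⟫ = ⟪x, Z n y⟫ :=
    fun n => ((hproj n).2).isSymmetric
  have hZZ : ∀ (n : ℕ) (x : H), Z n (Z n x) = Z n x := by
    intro n x
    have := congrArg (fun u : H →L[ℂ] H => u x) (hproj n).1
    simpa using this
  refine ⟨fun h0 => ?_, stmt13_aux Z S hproj horth hsumI hcomm T hT⟩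
  have hpos := (ContinuousLinearMap.nonneg_iff_isPositive S).mp h0
  refine ⟨stmt13_aux Z S hproj horth hsumI hcomm T hT hpos.isSelfAdjoint, fun ξ => ?_⟩
  have hTx : HasSum (fun n : ℕ => ((n : ℝ) + 1) • S (Z n (ξ : H))) (T ξ) :=
    ((hT ξ (T ξ)).mp (T.mem_graph ξ)).2
  have h1 : HasSum (fun n : ℕ => ⟪(ξ : H), ((n : ℝ) + 1) • S (Z n (ξ : H))⟫) ⟪(ξ : H), T ξ⟫ :=
    (innerSL ℂ (ξ : H)).hasSum hTx
  have h2 := h1.mapL Complex.reCLM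
  have hnonneg : ∀ n : ℕ,
      (0 : ℝ) ≤ Complex.reCLM ⟪(ξ : H), ((n : ℝ) + 1) • S (Z n (ξ : H))⟫ := by
    intro n
    have heq : S (Z n (ξ : H)) = Z n (S (Z n (ξ : H))) := by
      conv_lhs => rw [← hZZ n ξ]
      have := congrArg (fun u : H →L[ℂ] H => u (Z n (ξ : H))) (hcomm n)
      simpa using this
    have hre : Complex.re ⟪(ξ : H), S (Z n (ξ : H))⟫
        = Complex.re ⟪Z n (ξ : H), S (Z n (ξ : H))⟫ := by
      conv_lhs => rw [heq, ← hZsymm]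
    have hnn : 0 ≤ Complex.re ⟪Z n (ξ : H), S (Z n (ξ : H))⟫ := by
      exact (Complex.nonneg_iff.mp (hpos.inner_nonneg_right (Z n (ξ : H)))).1
    have hsm : Complex.reCLM ⟪(ξ : H), ((n : ℝ) + 1) • S (Z n (ξ : H))⟫
        = ((n : ℝ) + 1) * Complex.re ⟪(ξ : H), S (Z n (ξ : H))⟫ := by
      rw [RCLike.real_smul_eq_coe_smul (K := ℂ), inner_smul_right]
      simp
    rw [hsm, hre]
    positivity
  have hfin : (0 : ℝ) ≤ Complex.reCLM ⟪(ξ : H), T ξ⟫ := hasSum_le hnonneg hasSum_zero h2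
  have : (inner ℂ (T ξ) (ξ : H) : ℂ).re = Complex.re ⟪(ξ : H), T ξ⟫ := by
    simpa using inner_re_symm (𝕜 := ℂ) (T ξ) (ξ : H)
  rw [this]
  simpa using hfin
end

section
/- Let H be a complex Hilbert space, (P_k)_{k≥1} mutually orthogonal projections on H, and define for N ≥ 0 the operator T_N = ∑_{k=N+1}^∞ 2^k P_k with maximal domain. If φ(T_0) is a densely defined non-negative operator and for every N, φ(T_0) = N·Z + φ(T_N) with Z a nonzero projection and φ(T_N) non-negative, then a contradiction follows: specifically, for every ξ in the domain of φ(T_0), ⟨φ(T_0)ξ, ξ⟩ ≥ N‖Zξ‖² for all N, forcing Zξ = 0, contradicting density of the domain. -/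
/-- Let `(P k)` be mutually orthogonal projections, `Z` a nonzero orthogonal
projection, and `A = φ(T₀)` a densely defined non-negative operator such that for every
`N` there is a non-negative operator `B = φ(T_N)` (on the same domain) with
`A = N • Z + B`. Then a contradiction follows: for every `ξ` in the domain of `A`,
`⟨Aξ, ξ⟩ ≥ N ‖Z ξ‖²` for all `N`, forcing `Z ξ = 0` on a dense set, contradicting
`Z ≠ 0`. -/
theorem stmt17 {H : Type*} [NormedAddCommGroup H] [InnerProductSpace ℂ H] [CompleteSpace H]
    (P : ℕ → H →L[ℂ] H)
    (hP : ∀ k, IsIdempotentElem (P k) ∧ IsSelfAdjoint (P k))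
    (horthP : ∀ j k, j ≠ k → P j * P k = 0)
    (Z : H →L[ℂ] H) (hZ : IsIdempotentElem Z ∧ IsSelfAdjoint Z) (hZ0 : Z ≠ 0)
    (A : H →ₗ.[ℂ] H) (hdense : Dense (A.domain : Set H))
    (hnn : ∀ ξ : A.domain, 0 ≤ (inner ℂ (A ξ) (ξ : H) : ℂ).re)
    (hrel : ∀ N : ℕ, ∃ B : A.domain → H,
      (∀ ξ : A.domain, 0 ≤ (inner ℂ (B ξ) (ξ : H) : ℂ).re) ∧
        ∀ ξ : A.domain, A ξ = (N : ℝ) • Z (ξ : H) + B ξ) :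
    False := by
  -- ⟨Zξ, ξ⟩ = ‖Zξ‖²
  have hadj : Z.adjoint = Z := (ContinuousLinearMap.isSelfAdjoint_iff' ).mp hZ.2
  have hZinner : ∀ x : H, (inner ℂ (Z x) x : ℂ).re = ‖Z x‖ ^ 2 := by
    intro x
    have h2 : Z (Z x) = Z x := congrFun (congrArg DFunLike.coe hZ.1) x
    have h1 : (inner ℂ (Z x) x : ℂ) = inner ℂ (Z x) (Z x) := by
      calc (inner ℂ (Z x) x : ℂ) = inner ℂ (Z.adjoint (Z x)) x := by rw [hadj, h2]
        _ = inner ℂ (Z x) (Z x) := ContinuousLinearMap.adjoint_inner_left _ _ _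
    rw [h1, inner_self_eq_norm_sq_to_K]; norm_cast
  -- Z vanishes on the domain
  have hZzero : ∀ ξ : A.domain, Z (ξ : H) = 0 := by
    intro ξ
    by_contra hne
    have hn0 : 0 < ‖Z (ξ : H)‖ := norm_pos_iff.mpr hne
    have hpos : 0 < ‖Z (ξ : H)‖ ^ 2 := by positivity
    obtain ⟨N, hN⟩ := exists_nat_gt ((inner ℂ (A ξ) (ξ : H) : ℂ).re / ‖Z (ξ : H)‖ ^ 2)
    obtain ⟨B, hBnn, hBeq⟩ := hrel N
    have key : (N : ℝ) * ‖Z (ξ : H)‖ ^ 2 ≤ (inner ℂ (A ξ) (ξ : H) : ℂ).re := by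
      rw [hBeq ξ, inner_add_left, Complex.add_re]
      have : (inner ℂ ((N : ℝ) • Z (ξ : H)) (ξ : H) : ℂ).re
          = (N : ℝ) * (inner ℂ (Z (ξ : H)) (ξ : H) : ℂ).re := by
        rw [RCLike.real_smul_eq_coe_smul (K := ℂ), inner_smul_left]
        simp [Complex.mul_re]
      rw [this, hZinner]
      linarith [hBnn ξ]
    have h3 : (inner ℂ (A ξ) (ξ : H) : ℂ).re < (N : ℝ) * ‖Z (ξ : H)‖ ^ 2 := by
      rw [div_lt_iff₀ hpos] at hN
      linarith
    linarith
  -- Z = 0 by density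
  apply hZ0
  have heq : ⇑Z = ⇑(0 : H →L[ℂ] H) :=
    Continuous.ext_on hdense Z.continuous (ContinuousLinearMap.continuous 0)
      (fun y hy => hZzero ⟨y, hy⟩)
  ext x
  exact congrFun heq x
end
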